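/- Let x_1,...,x_d be vectors in a Hilbert space with positive definite Gram matrix. For distinct i, j and S ⊆ [d]\{i,j}: P_i (I − P_S) P_j = 0 if and only if [β_j(S∪{i})]_i = 0, where β_j(T) denotes the coefficients of the projection of x_j onto span{x_k : k ∈ T}. -/

import Mathlib

open scoped RealInnerProductSpace

theorem stmt_13 {H : Type*} [NormedAddCommGroup H] [InnerProductSpace ℝ H] [CompleteSpace H]
    {d : ℕ} (x : Fin d → H)
    (hGram : (Matrix.of fun (i j : Fin d) => (inner ℝ (x i) (x j) : ℝ)).PosDef)
    (P : Finset (Fin d) → H →L[ℝ] H)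
    (hsa : ∀ A, IsSelfAdjoint (P A))
    (hidem : ∀ A, P A * P A = P A)
    (hrange : ∀ A : Finset (Fin d), LinearMap.range (P A : H →ₗ[ℝ] H) = Submodule.span ℝ (x '' ↑A))
    (i j : Fin d) (hij : i ≠ j) (S : Finset (Fin d)) (hiS : i ∉ S) (hjS : j ∉ S)
    (β : Fin d → ℝ) (hsupp : ∀ k, β k ≠ 0 → k ∈ insert i S)
    (hβ : P (insert i S) (x j) = ∑ k ∈ insert i S, β k • x k) :
    P {i} * (1 - P S) * P {j} = 0 ↔ β i = 0 := by
  classical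
  have hsymm : ∀ A (u v : H), ⟪P A u, v⟫ = ⟪u, P A v⟫ := fun A =>
    (ContinuousLinearMap.isSelfAdjoint_iff_isSymmetric.mp (hsa A))
  have happ : ∀ A (y : H), P A (P A y) = P A y := by
    intro A y
    have := congrArg (fun f : H →L[ℝ] H => f y) (hidem A)
    simpa using this
  have hmem : ∀ (A : Finset (Fin d)) (y : H), P A y ∈ Submodule.span ℝ (x '' (↑A : Set (Fin d))) := by
    intro A y; rw [← hrange A]; exact ⟨y, rfl⟩
  have hfix : ∀ (A : Finset (Fin d)) (y : H), y ∈ Submodule.span ℝ (x '' (↑A : Set (Fin d))) → P A y = y := by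
    intro A y hy; rw [← hrange A] at hy; obtain ⟨z, rfl⟩ := hy; exact happ A z
  have hker : ∀ (A : Finset (Fin d)) (y : H),
      (∀ w ∈ Submodule.span ℝ (x '' (↑A : Set (Fin d))), ⟪y, w⟫ = 0) → P A y = 0 := by
    intro A y hy
    have h1 : ⟪P A y, P A y⟫ = ⟪y, P A (P A y)⟫ := hsymm A y (P A y)
    rw [happ, hy (P A y) (hmem A y)] at h1
    exact inner_self_eq_zero.mp h1
  -- linear independence from the Gram matrix
  have hli : LinearIndependent ℝ x := by
    rw [Fintype.linearIndependent_iff]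
    intro g hg
    by_contra hne
    push_neg at hne
    obtain ⟨k, hk⟩ := hne
    have hg0 : g ≠ 0 := fun h => hk (by rw [h]; rfl)
    have h2 := hGram.dotProduct_mulVec_pos hg0
    have hdot : dotProduct (star g)
        ((Matrix.of fun (a b : Fin d) => (inner ℝ (x a) (x b) : ℝ)).mulVec g)
        = ⟪∑ a, g a • x a, ∑ b, g b • x b⟫ := by
      simp [dotProduct, Matrix.mulVec, inner_sum, sum_inner,
        real_inner_smul_left, real_inner_smul_right, Finset.mul_sum, mul_assoc]
      rw [← real_inner_self_eq_norm_sq]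
      simp only [inner_sum, sum_inner, real_inner_smul_left, real_inner_smul_right, Finset.mul_sum]
      refine Finset.sum_congr rfl fun a _ => Finset.sum_congr rfl fun b _ => ?_
      rw [real_inner_comm]; ring
    rw [hdot, hg, inner_zero_left] at h2
    exact lt_irrefl 0 h2
  -- basic membership facts
  have hiT : x i ∈ Submodule.span ℝ (x '' (↑(insert i S) : Set (Fin d))) :=
    Submodule.subset_span ⟨i, by simp, rfl⟩
  have hST : Submodule.span ℝ (x '' (↑S : Set (Fin d)))
      ≤ Submodule.span ℝ (x '' (↑(insert i S) : Set (Fin d))) :=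
    Submodule.span_mono (Set.image_mono (by simp [Set.subset_insert]))
  have hiI : x i ∈ Submodule.span ℝ (x '' (↑({i} : Finset (Fin d)) : Set (Fin d))) :=
    Submodule.subset_span ⟨i, by simp, rfl⟩
  have hjJ : x j ∈ Submodule.span ℝ (x '' (↑({j} : Finset (Fin d)) : Set (Fin d))) :=
    Submodule.subset_span ⟨j, by simp, rfl⟩
  set r : H := x j - P (insert i S) (x j) with hr
  have hr_perp : ∀ w ∈ Submodule.span ℝ (x '' (↑(insert i S) : Set (Fin d))), ⟪r, w⟫ = 0 := by
    intro w hw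
    have h1 : ⟪P (insert i S) (x j), w⟫ = ⟪x j, w⟫ := by
      rw [hsymm, hfix _ w hw]
    simp [hr, inner_sub_left, h1]
  have hPSr : P S r = 0 := hker S r (fun w hw => hr_perp w (hST hw))
  have hPir : P {i} r = 0 := by
    refine hker {i} r (fun w hw => hr_perp w ?_)
    refine Submodule.span_mono (Set.image_mono ?_) hw
    simp
  have hPSv : P S (∑ k ∈ S, β k • x k) = ∑ k ∈ S, β k • x k := by
    refine hfix S _ (Submodule.sum_mem _ fun k hk => Submodule.smul_mem _ _ ?_)
    exact Submodule.subset_span ⟨k, by simpa using hk, rfl⟩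
  have hxj : x j = (β i • x i + ∑ k ∈ S, β k • x k) + r := by
    rw [hr, hβ, Finset.sum_insert hiS]; abel
  have hw : x j - P S (x j) = β i • (x i - P S (x i)) + r := by
    conv_lhs => rw [hxj]
    rw [map_add, map_add, ContinuousLinearMap.map_smul, hPSv, hPSr, smul_sub]
    abel
  -- the key inner product computation
  have hPSxi : ⟪P S (x i), x i - P S (x i)⟫ = 0 := by
    rw [hsymm, map_sub, happ, sub_self, inner_zero_right]
  have hinner : ⟪x i, P {i} (x j - P S (x j))⟫
      = β i * ⟪x i - P S (x i), x i - P S (x i)⟫ := by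
    have hxir : ⟪x i, r⟫ = 0 := by rw [real_inner_comm]; exact hr_perp (x i) hiT
    rw [← hsymm, hfix {i} (x i) hiI, hw, inner_add_right, hxir, add_zero,
      real_inner_smul_right]
    congr 1
    have : ⟪x i, x i - P S (x i)⟫ - ⟪P S (x i), x i - P S (x i)⟫
        = ⟪x i - P S (x i), x i - P S (x i)⟫ := by
      rw [← inner_sub_left]
    rw [← this, hPSxi, sub_zero]
  have hpos : (0:ℝ) < ⟪x i - P S (x i), x i - P S (x i)⟫ := by
    rw [real_inner_self_eq_norm_sq]
    have hne : x i - P S (x i) ≠ 0 := by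
      intro h
      have hx : x i = P S (x i) := by rwa [sub_eq_zero] at h
      have : x i ∈ Submodule.span ℝ (x '' (↑S : Set (Fin d))) := hx ▸ hmem S (x i)
      exact hli.notMem_span_image (by simpa using hiS) this
    exact pow_pos (norm_pos_iff.mpr hne) 2
  constructor
  · intro h0
    have h1 : (P {i} * (1 - P S) * P {j}) (x j) = 0 := by rw [h0]; rfl
    have h2 : P {i} (x j - P S (x j)) = 0 := by
      have := h1
      simpa [ContinuousLinearMap.mul_apply, hfix {j} (x j) hjJ,
        ContinuousLinearMap.sub_apply, map_sub] using this
    have := hinner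
    rw [h2, inner_zero_right] at this
    have := this.symm
    exact (mul_eq_zero.mp this).resolve_right (ne_of_gt hpos)
  · intro hβi
    have hzero : P {i} (x j - P S (x j)) = 0 := by
      rw [hw, hβi, zero_smul, zero_add, hPir]
    ext y
    obtain ⟨t, ht⟩ : ∃ t : ℝ, P {j} y = t • x j := by
      have := hmem {j} y
      simp only [Finset.coe_singleton, Set.image_singleton, Submodule.mem_span_singleton] at this
      obtain ⟨t, ht⟩ := this
      exact ⟨t, ht.symm⟩
    simp only [ContinuousLinearMap.mul_apply, ContinuousLinearMap.zero_apply, ht,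
      ContinuousLinearMap.sub_apply, ContinuousLinearMap.one_apply, map_smul]
    rw [hzero, smul_zero]
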